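/- Let P be a probability measure, δ ∈ (0,1), and Δ: Ω → ℝ, f: Ω → ℝ measurable. Then log P(f(ω) > Δ(ω)) ≤ max( log δ, sup over probability measures ν with D_KL(ν‖P) ≤ log(1/δ) and ν(f ≤ Δ) = 0 of inf over λ ≥ 0 of ( −D_KL(ν‖P) − λ E_ν[Δ − f] ) ). -/

import Mathlib

open MeasureTheory
open scoped ENNReal

/-- KL divergence `D_KL(ν ‖ P) = E_ν[log (dν/dP)]` (as a real integral). -/
noncomputable def klReal {Ω : Type*} [MeasurableSpace Ω] (ν P : Measure Ω) : ℝ :=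
  ∫ ω, Real.log ((ν.rnDeriv P ω).toReal) ∂ν

/-- Nonnegativity of KL divergence. -/
lemma klReal_nonneg {Ω : Type*} [MeasurableSpace Ω] (ν P : Measure Ω)
    [IsProbabilityMeasure ν] [IsProbabilityMeasure P] (hνP : ν ≪ P) :
    0 ≤ klReal ν P := by
  classical
  set g : Ω → ℝ≥0∞ := ν.rnDeriv P with hg
  have hg_meas : Measurable g := Measure.measurable_rnDeriv ν P
  have hpos : ∀ᵐ ω ∂ν, 0 < g ω := Measure.rnDeriv_pos hνP
  have hlt : ∀ᵐ ω ∂ν, g ω < ∞ := hνP.ae_le (Measure.rnDeriv_lt_top ν P)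
  -- lintegral of g⁻¹ wrt ν is at most 1
  have hlint : ∫⁻ ω, (g ω)⁻¹ ∂ν ≤ 1 := by
    have hwd : P.withDensity g = ν := Measure.withDensity_rnDeriv_eq ν P hνP
    calc ∫⁻ ω, (g ω)⁻¹ ∂ν = ∫⁻ ω, (g ω)⁻¹ ∂(P.withDensity g) := by rw [hwd]
    _ = ∫⁻ ω, g ω * (g ω)⁻¹ ∂P := by
        refine (lintegral_withDensity_eq_lintegral_mul P hg_meas hg_meas.inv).trans ?_
        rfl
    _ ≤ ∫⁻ _, 1 ∂P := lintegral_mono fun ω => ENNReal.mul_inv_le_one (g ω)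
    _ = 1 := by simp
  have hinv_int : Integrable (fun ω => ((g ω)⁻¹).toReal) ν :=
    integrable_toReal_of_lintegral_ne_top hg_meas.inv.aemeasurable
      (lt_of_le_of_lt hlint ENNReal.one_lt_top).ne
  have hinv_le : ∫ ω, ((g ω)⁻¹).toReal ∂ν ≤ 1 := by
    have hfin : ∀ᵐ ω ∂ν, (g ω)⁻¹ < ∞ := by
      filter_upwards [hpos] with ω hω
      exact ENNReal.inv_lt_top.2 hω
    rw [show (∫ ω, ((g ω)⁻¹).toReal ∂ν) = (∫⁻ ω, (g ω)⁻¹ ∂ν).toReal from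
      integral_toReal hg_meas.inv.aemeasurable hfin]
    calc (∫⁻ ω, (g ω)⁻¹ ∂ν).toReal ≤ (1 : ℝ≥0∞).toReal :=
          ENNReal.toReal_mono ENNReal.one_ne_top hlint
    _ = 1 := by simp
  by_cases hint : Integrable (fun ω => Real.log ((g ω).toReal)) ν
  · have hle : (fun ω => 1 - ((g ω)⁻¹).toReal) ≤ᵐ[ν]
        fun ω => Real.log ((g ω).toReal) := by
      filter_upwards [hpos, hlt] with ω h0 h1
      have hx : 0 < (g ω).toReal := ENNReal.toReal_pos h0.ne' h1.ne
      rw [ENNReal.toReal_inv]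
      exact Real.one_sub_inv_le_log_of_pos hx
    have h1 : Integrable (fun ω => 1 - ((g ω)⁻¹).toReal) ν :=
      (integrable_const (1 : ℝ)).sub hinv_int
    have hmono := integral_mono_ae h1 hint hle
    have : ∫ ω, (1 - ((g ω)⁻¹).toReal) ∂ν
        = 1 - ∫ ω, ((g ω)⁻¹).toReal ∂ν := by
      rw [integral_sub (integrable_const (1 : ℝ)) hinv_int]
      simp
    rw [this] at hmono
    have : (0 : ℝ) ≤ 1 - ∫ ω, ((g ω)⁻¹).toReal ∂ν := by linarith
    exact le_trans this hmono
  · unfold klReal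
    rw [integral_undef hint]

theorem tail_bound_change_of_measure {Ω : Type*} [MeasurableSpace Ω]
    (P : Measure Ω) [IsProbabilityMeasure P] (δ : ℝ) (hδ : 0 < δ) (hδ1 : δ < 1)
    (Δ f : Ω → ℝ) (hΔ : Measurable Δ) (hf : Measurable f) :
    Real.log (P {ω | Δ ω < f ω}).toReal ≤
      max (Real.log δ)
        (⨆ ν : {ν : Measure Ω // IsProbabilityMeasure ν ∧ ν ≪ P ∧
            klReal ν P ≤ Real.log (1 / δ) ∧ (ν : Measure Ω) {ω | f ω ≤ Δ ω} = 0},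
          ⨅ l : {l : ℝ // 0 ≤ l},
            (- klReal (ν : Measure Ω) P
              - (l : ℝ) * ∫ ω, (Δ ω - f ω) ∂(ν : Measure Ω))) := by
  classical
  set A : Set Ω := {ω | Δ ω < f ω} with hA
  have hA_meas : MeasurableSet A := measurableSet_lt hΔ hf
  have hAc : Aᶜ = {ω | f ω ≤ Δ ω} := by
    ext ω; simp [hA, not_lt]
  set p : ℝ≥0∞ := P A with hp
  -- convenient notation for the index type
  set ι := {ν : Measure Ω // IsProbabilityMeasure ν ∧ ν ≪ P ∧
      klReal ν P ≤ Real.log (1 / δ) ∧ (ν : Measure Ω) {ω | f ω ≤ Δ ω} = 0} with hι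
  -- For any ν in the index set, ν is supported on A, hence ∫ (Δ - f) dν ≤ 0,
  -- the inner family is bounded below and the iInf is ≤ 0.
  have key : ∀ ν : ι,
      (∫ ω, (Δ ω - f ω) ∂(ν : Measure Ω)) ≤ 0 ∧
      (⨅ l : {l : ℝ // 0 ≤ l},
        (- klReal (ν : Measure Ω) P
          - (l : ℝ) * ∫ ω, (Δ ω - f ω) ∂(ν : Measure Ω))) ≤ 0 := by
    intro ⟨ν, hνprob, hνP, hνkl, hνsupp⟩
    haveI := hνprob
    have hsupp : ∀ᵐ ω ∂ν, Δ ω < f ω := by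
      rw [ae_iff]
      simpa only [not_lt] using hνsupp
    have hneg : ∫ ω, (Δ ω - f ω) ∂ν ≤ 0 := by
      apply integral_nonpos_of_ae
      filter_upwards [hsupp] with ω hω
      simp [le_of_lt hω]
    refine ⟨hneg, ?_⟩
    have hbdd : BddBelow (Set.range (fun l : {l : ℝ // 0 ≤ l} =>
        (- klReal ν P - (l : ℝ) * ∫ ω, (Δ ω - f ω) ∂ν))) := by
      refine ⟨- klReal ν P, ?_⟩
      rintro x ⟨l, rfl⟩
      have : (l : ℝ) * ∫ ω, (Δ ω - f ω) ∂ν ≤ 0 :=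
        mul_nonpos_of_nonneg_of_nonpos l.2 hneg
      show - klReal ν P ≤ - klReal ν P - (l : ℝ) * ∫ ω, (Δ ω - f ω) ∂ν
      linarith
    have h0 := ciInf_le hbdd (⟨0, le_refl 0⟩ : {l : ℝ // 0 ≤ l})
    simp only [zero_mul, sub_zero] at h0
    have hklnn : 0 ≤ klReal ν P := klReal_nonneg ν P hνP
    calc (⨅ l : {l : ℝ // 0 ≤ l},
        (- klReal ν P - (l : ℝ) * ∫ ω, (Δ ω - f ω) ∂ν)) ≤ - klReal ν P := h0
    _ ≤ 0 := by linarith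
  have hbddS : BddAbove (Set.range (fun ν : ι =>
      (⨅ l : {l : ℝ // 0 ≤ l},
        (- klReal (ν : Measure Ω) P
          - (l : ℝ) * ∫ ω, (Δ ω - f ω) ∂(ν : Measure Ω))))) := by
    refine ⟨0, ?_⟩
    rintro x ⟨ν, rfl⟩
    exact (key ν).2
  by_cases hp0 : p = 0
  · -- the index set is empty and P A = 0
    haveI : IsEmpty ι := by
      constructor
      rintro ⟨ν, hνprob, hνP, hνkl, hνsupp⟩
      have h1 : ν A = 0 := hνP (by rw [← hp]; exact hp0)
      have h2 : ν Aᶜ = 0 := by rw [hAc]; exact hνsupp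
      have : ν Set.univ = 0 := by
        have := measure_union_le (μ := ν) A Aᶜ
        rw [Set.union_compl_self, h1, h2] at this
        simpa using this
      rw [hνprob.measure_univ] at this
      exact one_ne_zero this
    rw [Real.iSup_of_isEmpty]
    rw [hp0]
    simpa using le_max_right (Real.log δ) (0 : ℝ)
  · -- P A > 0
    have hp_lt_top : p < ∞ := lt_of_le_of_lt prob_le_one ENNReal.one_lt_top
    have hpr_pos : 0 < p.toReal := ENNReal.toReal_pos hp0 hp_lt_top.ne
    by_cases hple : p.toReal ≤ δ
    · exact le_max_of_le_left (Real.log_le_log hpr_pos hple)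
    · push_neg at hple
      -- construct the conditional measure ν = p⁻¹ • P restricted to A
      set d : Ω → ℝ≥0∞ := A.indicator (fun _ => p⁻¹) with hd
      have hd_meas : Measurable d := measurable_const.indicator hA_meas
      set ν : Measure Ω := P.withDensity d with hν
      have hνAc : ν Aᶜ = 0 := by
        rw [hν, withDensity_apply _ hA_meas.compl]
        have : ∀ ω ∈ Aᶜ, d ω = 0 := fun ω hω => Set.indicator_of_notMem hω _
        rw [setLIntegral_congr_fun hA_meas.compl (show Set.EqOn d (fun _ => 0) Aᶜ from this)]
        simp
      have hνuniv : ν Set.univ = 1 := by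
        rw [hν, withDensity_apply _ MeasurableSet.univ, Measure.restrict_univ, hd]
        rw [lintegral_indicator hA_meas]
        simp only [lintegral_const, Measure.restrict_apply MeasurableSet.univ,
          Set.univ_inter]
        rw [← hp, ENNReal.inv_mul_cancel hp0 hp_lt_top.ne]
      haveI hνprob : IsProbabilityMeasure ν := ⟨hνuniv⟩
      have hνP : ν ≪ P := withDensity_absolutelyContinuous P d
      have hνae_mem : ∀ᵐ ω ∂ν, ω ∈ A := by
        rw [ae_iff]
        exact hνAc
      -- compute klReal ν P
      have hrn : (fun ω => Real.log ((ν.rnDeriv P ω).toReal))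
          =ᵐ[ν] fun _ => - Real.log p.toReal := by
        have hrnP : ν.rnDeriv P =ᵐ[P] d := Measure.rnDeriv_withDensity P hd_meas
        filter_upwards [hνP.ae_le hrnP, hνae_mem] with ω hω hmem
        rw [hω, hd, Set.indicator_of_mem hmem, ENNReal.toReal_inv,
          Real.log_inv]
      have hkl : klReal ν P = - Real.log p.toReal := by
        unfold klReal
        rw [integral_congr_ae hrn, integral_const]
        simp
      -- ν is in the index set
      have hklδ : klReal ν P ≤ Real.log (1 / δ) := by
        rw [hkl, one_div, Real.log_inv, neg_le_neg_iff]
        exact Real.log_le_log hδ hple.le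
      have hνsupp : ν {ω | f ω ≤ Δ ω} = 0 := by
        have h := hνAc; rw [hAc] at h; exact h
      set ν' : ι := ⟨ν, hνprob, hνP, hklδ, hνsupp⟩ with hν'
      have hstep : Real.log p.toReal ≤
          ⨅ l : {l : ℝ // 0 ≤ l},
            (- klReal ν P - (l : ℝ) * ∫ ω, (Δ ω - f ω) ∂ν) := by
        apply le_ciInf
        intro l
        have hneg := (key ν').1
        have : (l : ℝ) * ∫ ω, (Δ ω - f ω) ∂ν ≤ 0 :=
          mul_nonpos_of_nonneg_of_nonpos l.2 hneg
        rw [hkl]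
        linarith
      refine le_max_of_le_right (le_trans hstep ?_)
      exact le_ciSup hbddS ν'
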